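/- In R(F₄) = K⟨x,y⟩/(xyx, yxy, (x+y)²), the identities y⁵ = y²x³ = yx³y = x³y² = xy²x² = x²y²x = -x⁵ hold. -/

import Mathlib

/-- The defining relations of `R(F₄) = K⟨x,y⟩/(xyx, yxy, (x+y)²)`. -/
inductive F4Rel (K : Type) [Field K] : FreeAlgebra K Bool → FreeAlgebra K Bool → Prop
  | xyx : F4Rel K (FreeAlgebra.ι K true * FreeAlgebra.ι K false * FreeAlgebra.ι K true) 0
  | yxy : F4Rel K (FreeAlgebra.ι K false * FreeAlgebra.ι K true * FreeAlgebra.ι K false) 0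
  | sq  : F4Rel K ((FreeAlgebra.ι K true + FreeAlgebra.ι K false) ^ 2) 0

/-- The algebra `R(F₄)`. -/
abbrev RF4 (K : Type) [Field K] := RingQuot (F4Rel K)

/-- The image of the generator `x` in `R(F₄)`. -/
noncomputable def Rx (K : Type) [Field K] : RF4 K :=
  RingQuot.mkAlgHom K (F4Rel K) (FreeAlgebra.ι K true)

/-- The image of the generator `y` in `R(F₄)`. -/
noncomputable def Ry (K : Type) [Field K] : RF4 K :=
  RingQuot.mkAlgHom K (F4Rel K) (FreeAlgebra.ι K false)

lemma f4_key {R : Type*} [Ring R] (x y : R) (hx : x*y*x = 0) (hy : y*x*y = 0)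
    (hs : (x+y)^2 = 0) :
    y ^ 5 = -x ^ 5 ∧ y ^ 2 * x ^ 3 = -x ^ 5 ∧ y * x ^ 3 * y = -x ^ 5 ∧
    x ^ 3 * y ^ 2 = -x ^ 5 ∧ x * y ^ 2 * x ^ 2 = -x ^ 5 ∧ x ^ 2 * y ^ 2 * x = -x ^ 5 := by
  have a : y*y*x = -(x*x*x) - y*(x*x) := by
    linear_combination (norm := noncomm_ring) hs * x - hx
  have b : x*(y*y) = -(x*x*x) - x*x*y := by
    linear_combination (norm := noncomm_ring) x * hs - hx
  have c : y*y*y = x*x*x := by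
    linear_combination (norm := noncomm_ring) y * hs - hy - a
  have d : y*(x*x*x*x) = 0 := by
    linear_combination (norm := noncomm_ring) hy * (y*y) - y*x*c
  have e : x*x*x*y = y*y*y*y := by
    linear_combination (norm := noncomm_ring) -(c * y)
  have f : y*y*y*y*x = 0 := by
    linear_combination (norm := noncomm_ring) y*c*x + d
  have g : y*y*(x*x) = -(x*x*x*x) - y*y*y*y := by
    linear_combination (norm := noncomm_ring) a*x + y*c
  have h1 : y ^ 5 = -x ^ 5 := by
    linear_combination (norm := noncomm_ring) y*y*c + g*x - f
  refine ⟨h1, ?_, ?_, ?_, ?_, ?_⟩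
  · linear_combination (norm := noncomm_ring) g*x - f
  · linear_combination (norm := noncomm_ring) y*e + h1
  · linear_combination (norm := noncomm_ring) e*y + h1
  · linear_combination (norm := noncomm_ring) b*x*x - x*hx*x
  · linear_combination (norm := noncomm_ring) x*b*x - e*x - f

theorem stmt7 (K : Type) [Field K] :
    (Ry K) ^ 5 = -(Rx K) ^ 5 ∧
    (Ry K) ^ 2 * (Rx K) ^ 3 = -(Rx K) ^ 5 ∧
    Ry K * (Rx K) ^ 3 * Ry K = -(Rx K) ^ 5 ∧
    (Rx K) ^ 3 * (Ry K) ^ 2 = -(Rx K) ^ 5 ∧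
    Rx K * (Ry K) ^ 2 * (Rx K) ^ 2 = -(Rx K) ^ 5 ∧
    (Rx K) ^ 2 * (Ry K) ^ 2 * Rx K = -(Rx K) ^ 5 := by
  have hx : Rx K * Ry K * Rx K = 0 := by
    have := RingQuot.mkAlgHom_rel K (F4Rel.xyx (K := K))
    simpa only [map_mul, map_zero, Rx, Ry] using this
  have hy : Ry K * Rx K * Ry K = 0 := by
    have := RingQuot.mkAlgHom_rel K (F4Rel.yxy (K := K))
    simpa only [map_mul, map_zero, Rx, Ry] using this
  have hs : (Rx K + Ry K) ^ 2 = 0 := by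
    have := RingQuot.mkAlgHom_rel K (F4Rel.sq (K := K))
    simpa only [map_pow, map_add, map_zero, Rx, Ry] using this
  exact f4_key (Rx K) (Ry K) hx hy hs
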